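/- arXiv:2201.07777 — 2 statements merged into one kernel-verified Lean document; each statement's English description precedes it below -/
import Mathlib

section
/- Let d ≥ 4 be an integer and let G be a bipartite graph with partite sets U and W such that |U| > C(|W|, 3) (the number of 3-element subsets of W) and every vertex in U has at least d neighbours in W. Then G contains a copy of the 3-dimensional hypercube Q₃ as a subgraph. -/
/-- The 3-dimensional hypercube graph `Q₃` on vertex set `{0,1}³`:
two vertices are adjacent iff they differ in exactly one coordinate. -/
def cubeQ3 : SimpleGraph (Fin 2 × Fin 2 × Fin 2) :=
  SimpleGraph.fromRel (fun x y =>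
    (x.1 ≠ y.1 ∧ x.2.1 = y.2.1 ∧ x.2.2 = y.2.2) ∨
    (x.1 = y.1 ∧ x.2.1 ≠ y.2.1 ∧ x.2.2 = y.2.2) ∨
    (x.1 = y.1 ∧ x.2.1 = y.2.1 ∧ x.2.2 ≠ y.2.2))

/-- `G` contains a copy of `Q₃` as a (not necessarily induced) subgraph. -/
def HasQ3Copy {V : Type*} (G : SimpleGraph V) : Prop :=
  ∃ f : (Fin 2 × Fin 2 × Fin 2) → V,
    Function.Injective f ∧ ∀ a b, cubeQ3.Adj a b → G.Adj (f a) (f b)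

set_option maxHeartbeats 1000000 in
lemma buildQ3 {V : Type*} (G : SimpleGraph V) (u1 u2 u3 u4 w1 w2 w3 w4 : V)
    (hu12 : u1 ≠ u2) (hu13 : u1 ≠ u3) (hu14 : u1 ≠ u4)
    (hu23 : u2 ≠ u3) (hu24 : u2 ≠ u4) (hu34 : u3 ≠ u4)
    (hw12 : w1 ≠ w2) (hw13 : w1 ≠ w3) (hw14 : w1 ≠ w4)
    (hw23 : w2 ≠ w3) (hw24 : w2 ≠ w4) (hw34 : w3 ≠ w4)
    (h11 : u1 ≠ w1) (h22 : u2 ≠ w2) (h33 : u3 ≠ w3) (h44 : u4 ≠ w4)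
    (a12 : G.Adj u1 w2) (a13 : G.Adj u1 w3) (a14 : G.Adj u1 w4)
    (a21 : G.Adj u2 w1) (a23 : G.Adj u2 w3) (a24 : G.Adj u2 w4)
    (a31 : G.Adj u3 w1) (a32 : G.Adj u3 w2) (a34 : G.Adj u3 w4)
    (a41 : G.Adj u4 w1) (a42 : G.Adj u4 w2) (a43 : G.Adj u4 w3) :
    HasQ3Copy G := by
  refine ⟨fun x => ![![![u1,w4],![w3,u2]], ![![w2,u3],![u4,w1]]] x.1 x.2.1 x.2.2, ?_, ?_⟩
  · have n12 := a12.ne; have n13 := a13.ne; have n14 := a14.ne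
    have n21 := a21.ne; have n23 := a23.ne; have n24 := a24.ne
    have n31 := a31.ne; have n32 := a32.ne; have n34 := a34.ne
    have n41 := a41.ne; have n42 := a42.ne; have n43 := a43.ne
    intro a b hab
    fin_cases a <;> fin_cases b <;> simp_all
  · intro a b hab
    fin_cases a <;> fin_cases b <;>
      simp_all [cubeQ3, SimpleGraph.fromRel_adj] <;>
      first
        | exact a12 | exact a13 | exact a14 | exact a21 | exact a23 | exact a24
        | exact a31 | exact a32 | exact a34 | exact a41 | exact a42 | exact a43
        | exact a12.symm | exact a13.symm | exact a14.symm | exact a21.symm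
        | exact a23.symm | exact a24.symm | exact a31.symm | exact a32.symm
        | exact a34.symm | exact a41.symm | exact a42.symm | exact a43.symm


/-- if `G` is bipartite with parts `U`, `W`, every vertex of `U`
has at least `d ≥ 4` neighbours in `W`, and `|U| > C(|W|,3)`, then `G ⊇ Q₃`. -/
theorem stmt0 {V : Type*} [Fintype V] [DecidableEq V]
    (G : SimpleGraph V) [DecidableRel G.Adj] (U W : Finset V)
    (hdisj : Disjoint U W)
    (hbip : ∀ u v : V, G.Adj u v → (u ∈ U ∧ v ∈ W) ∨ (u ∈ W ∧ v ∈ U))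
    (d : ℕ) (hd : 4 ≤ d)
    (hU : W.card.choose 3 < U.card)
    (hdeg : ∀ u ∈ U, d ≤ (G.neighborFinset u ∩ W).card) :
    HasQ3Copy G := by
  classical
  by_contra hQ3
  -- choose a 4-element subset of the neighbourhood of each u ∈ U
  have hex : ∀ u, ∃ B : Finset V, u ∈ U → B ⊆ G.neighborFinset u ∩ W ∧ B.card = 4 := by
    intro u
    by_cases hu : u ∈ U
    · obtain ⟨B, hB1, hB2⟩ := Finset.exists_subset_card_eq (le_trans hd (hdeg u hu))
      exact ⟨B, fun _ => ⟨hB1, hB2⟩⟩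
    · exact ⟨∅, fun h => absurd h hu⟩
  choose A hA using hex
  have hAW : ∀ u ∈ U, A u ⊆ W := fun u hu => (hA u hu).1.trans Finset.inter_subset_right
  have hAcard : ∀ u ∈ U, (A u).card = 4 := fun u hu => (hA u hu).2
  have hAadj : ∀ u ∈ U, ∀ w ∈ A u, G.Adj u w := by
    intro u hu w hw
    have h := (hA u hu).1 hw
    rw [Finset.mem_inter, SimpleGraph.mem_neighborFinset] at h
    exact h.1
  set fib : Finset V → Finset V := fun T => U.filter (fun u => A u = T) with hfibdef
  set Excl : Finset V → Finset (Finset V) :=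
    fun T => (T.powersetCard 3).filter (fun S => ∀ u ∈ U, S ⊆ A u → A u = T) with hExcldef
  -- key claim : each fiber injects into its exclusive triples
  have key : ∀ T ∈ U.image A, (fib T).card ≤ (Excl T).card := by
    intro T hT
    obtain ⟨u₀, hu₀U, hu₀⟩ := Finset.mem_image.mp hT
    by_contra hlt
    push_neg at hlt
    have hTcard : T.card = 4 := by rw [← hu₀]; exact hAcard u₀ hu₀U
    have hTW : T ⊆ W := by rw [← hu₀]; exact hAW u₀ hu₀U
    -- an injection ψ from Excl T into fib T
    obtain ⟨t', ht'sub, ht'card⟩ := Finset.exists_subset_card_eq hlt.le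
    have hcc : Fintype.card (Excl T) = Fintype.card t' := by
      rw [Fintype.card_coe, Fintype.card_coe, ht'card]
    set e := Fintype.equivOfCardEq hcc with he
    set ψ : Finset V → V := fun S => if hS : S ∈ Excl T then (e ⟨S, hS⟩ : V) else u₀ with hψdef
    have hψfib : ∀ S ∈ Excl T, ψ S ∈ fib T := by
      intro S hS
      simp only [hψdef, dif_pos hS]
      exact ht'sub (e ⟨S, hS⟩).2
    have hψinj : ∀ S₁ ∈ Excl T, ∀ S₂ ∈ Excl T, ψ S₁ = ψ S₂ → S₁ = S₂ := by
      intro S₁ h₁ S₂ h₂ h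
      simp only [hψdef, dif_pos h₁, dif_pos h₂] at h
      exact congrArg Subtype.val (e.injective (Subtype.ext h))
    -- witnesses for non-exclusive triples
    have hwitex : ∀ S, ∃ u, (S ∈ T.powersetCard 3 ∧ S ∉ Excl T) →
        u ∈ U ∧ S ⊆ A u ∧ A u ≠ T := by
      intro S
      by_cases hS : S ∈ T.powersetCard 3 ∧ S ∉ Excl T
      · have h1 : ¬ (∀ u ∈ U, S ⊆ A u → A u = T) := by
          intro hall
          exact hS.2 (Finset.mem_filter.mpr ⟨hS.1, hall⟩)
        push_neg at h1
        obtain ⟨u, hu, h2, h3⟩ := h1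
        exact ⟨u, fun _ => ⟨hu, h2, h3⟩⟩
      · exact ⟨u₀, fun h => absurd h hS⟩
    choose wit hwit using hwitex
    set φ : Finset V → V := fun S => if S ∈ Excl T then ψ S else wit S with hφdef
    have hφU : ∀ S ∈ T.powersetCard 3, φ S ∈ U := by
      intro S hS
      by_cases h : S ∈ Excl T
      · simp only [hφdef, if_pos h]
        exact (Finset.mem_filter.mp (hψfib S h)).1
      · simp only [hφdef, if_neg h]
        exact (hwit S ⟨hS, h⟩).1
    have hφA : ∀ S ∈ T.powersetCard 3, S ⊆ A (φ S) := by
      intro S hS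
      by_cases h : S ∈ Excl T
      · simp only [hφdef, if_pos h]
        have hfT : A (ψ S) = T := (Finset.mem_filter.mp (hψfib S h)).2
        rw [hfT]
        exact (Finset.mem_powersetCard.mp hS).1
      · simp only [hφdef, if_neg h]
        exact (hwit S ⟨hS, h⟩).2.1
    have hφinj : ∀ S₁ ∈ T.powersetCard 3, ∀ S₂ ∈ T.powersetCard 3, φ S₁ = φ S₂ → S₁ = S₂ := by
      intro S₁ h₁ S₂ h₂ h
      by_cases e₁ : S₁ ∈ Excl T <;> by_cases e₂ : S₂ ∈ Excl T
      · simp only [hφdef, if_pos e₁, if_pos e₂] at h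
        exact hψinj S₁ e₁ S₂ e₂ h
      · exfalso
        simp only [hφdef, if_pos e₁, if_neg e₂] at h
        have hA1 : A (ψ S₁) = T := (Finset.mem_filter.mp (hψfib S₁ e₁)).2
        exact (hwit S₂ ⟨h₂, e₂⟩).2.2 (by rw [← h, hA1])
      · exfalso
        simp only [hφdef, if_neg e₁, if_pos e₂] at h
        have hA2 : A (ψ S₂) = T := (Finset.mem_filter.mp (hψfib S₂ e₂)).2
        exact (hwit S₁ ⟨h₁, e₁⟩).2.2 (by rw [h, hA2])
      · simp only [hφdef, if_neg e₁, if_neg e₂] at h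
        by_contra hne
        obtain ⟨huU, hsub1, hneT⟩ := hwit S₁ ⟨h₁, e₁⟩
        obtain ⟨huU2, hsub2, hneT2⟩ := hwit S₂ ⟨h₂, e₂⟩
        rw [h] at hsub1
        obtain ⟨hS₁T, hc₁⟩ := Finset.mem_powersetCard.mp h₁
        obtain ⟨hS₂T, hc₂⟩ := Finset.mem_powersetCard.mp h₂
        have hint : (S₁ ∩ S₂).card ≤ 2 := by
          by_contra hgt
          push_neg at hgt
          have h1 : S₁ ∩ S₂ = S₁ :=
            Finset.eq_of_subset_of_card_le Finset.inter_subset_left (by omega)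
          have hsub : S₁ ⊆ S₂ := by rw [← h1]; exact Finset.inter_subset_right
          exact hne (Finset.eq_of_subset_of_card_le hsub (by omega)).symm.symm
        have hcui := Finset.card_union_add_card_inter S₁ S₂
        have hUnion : S₁ ∪ S₂ = T :=
          Finset.eq_of_subset_of_card_le (Finset.union_subset hS₁T hS₂T) (by omega)
        have hTsub : T ⊆ A (wit S₂) := by
          rw [← hUnion]; exact Finset.union_subset hsub1 hsub2
        have : T = A (wit S₂) :=
          Finset.eq_of_subset_of_card_le hTsub (by rw [hAcard _ huU2, hTcard])
        exact hneT2 this.symm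
    -- extract the four elements of T
    obtain ⟨t1, ht1⟩ := Finset.card_pos.mp (by omega : 0 < T.card)
    have h3 : (T.erase t1).card = 3 := by rw [Finset.card_erase_of_mem ht1, hTcard]
    obtain ⟨t2, t3, t4, h23, h24, h34, hE⟩ := Finset.card_eq_three.mp h3
    have ht2e : t2 ∈ T.erase t1 := by rw [hE]; simp
    have ht3e : t3 ∈ T.erase t1 := by rw [hE]; simp
    have ht4e : t4 ∈ T.erase t1 := by rw [hE]; simp
    obtain ⟨h21, ht2⟩ := Finset.mem_erase.mp ht2e
    obtain ⟨h31, ht3⟩ := Finset.mem_erase.mp ht3e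
    obtain ⟨h41, ht4⟩ := Finset.mem_erase.mp ht4e
    have hS : ∀ t ∈ T, T.erase t ∈ T.powersetCard 3 := by
      intro t ht
      exact Finset.mem_powersetCard.mpr
        ⟨Finset.erase_subset _ _, by rw [Finset.card_erase_of_mem ht, hTcard]⟩
    have hErasene : ∀ a ∈ T, ∀ b ∈ T, a ≠ b → T.erase a ≠ T.erase b := by
      intro a ha b hb hab hEq
      have hmem : b ∈ T.erase a := Finset.mem_erase.mpr ⟨Ne.symm hab, hb⟩
      rw [hEq] at hmem
      exact Finset.notMem_erase b T hmem
    have hvne : ∀ a ∈ T, ∀ b ∈ T, a ≠ b → φ (T.erase a) ≠ φ (T.erase b) := by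
      intro a ha b hb hab hEq
      exact hErasene a ha b hb hab (hφinj _ (hS a ha) _ (hS b hb) hEq)
    have hadj : ∀ t ∈ T, ∀ s ∈ T, s ≠ t → G.Adj (φ (T.erase t)) s := by
      intro t ht s hs hst
      have hmem : s ∈ T.erase t := Finset.mem_erase.mpr ⟨hst, hs⟩
      exact hAadj _ (hφU _ (hS t ht)) s (hφA _ (hS t ht) hmem)
    have hvW : ∀ t ∈ T, ∀ s ∈ T, φ (T.erase t) ≠ s := by
      intro t ht s hs hEq
      have : φ (T.erase t) ∉ W := Finset.disjoint_left.mp hdisj (hφU _ (hS t ht))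
      exact this (hEq ▸ hTW hs)
    exact hQ3 (buildQ3 G (φ (T.erase t1)) (φ (T.erase t2)) (φ (T.erase t3)) (φ (T.erase t4))
      t1 t2 t3 t4
      (hvne t1 ht1 t2 ht2 (Ne.symm h21)) (hvne t1 ht1 t3 ht3 (Ne.symm h31))
      (hvne t1 ht1 t4 ht4 (Ne.symm h41)) (hvne t2 ht2 t3 ht3 h23)
      (hvne t2 ht2 t4 ht4 h24) (hvne t3 ht3 t4 ht4 h34)
      (Ne.symm h21) (Ne.symm h31) (Ne.symm h41) h23 h24 h34
      (hvW t1 ht1 t1 ht1) (hvW t2 ht2 t2 ht2) (hvW t3 ht3 t3 ht3) (hvW t4 ht4 t4 ht4)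
      (hadj t1 ht1 t2 ht2 h21) (hadj t1 ht1 t3 ht3 h31) (hadj t1 ht1 t4 ht4 h41)
      (hadj t2 ht2 t1 ht1 (Ne.symm h21).symm.symm) (hadj t2 ht2 t3 ht3 (Ne.symm h23).symm.symm)
      (hadj t2 ht2 t4 ht4 (Ne.symm h24).symm.symm)
      (hadj t3 ht3 t1 ht1 (Ne.symm h31).symm.symm) (hadj t3 ht3 t2 ht2 h23)
      (hadj t3 ht3 t4 ht4 (Ne.symm h34).symm.symm)
      (hadj t4 ht4 t1 ht1 (Ne.symm h41).symm.symm) (hadj t4 ht4 t2 ht2 h24)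
      (hadj t4 ht4 t3 ht3 h34))
  -- final counting
  have hfibsum : U.card = ∑ T ∈ U.image A, (fib T).card :=
    Finset.card_eq_sum_card_fiberwise (fun u hu => Finset.mem_image_of_mem A hu)
  have hdisjE : ∀ T₁ ∈ U.image A, ∀ T₂ ∈ U.image A, T₁ ≠ T₂ → Disjoint (Excl T₁) (Excl T₂) := by
    intro T₁ h₁ T₂ h₂ hne
    rw [Finset.disjoint_left]
    intro S hS₁ hS₂
    obtain ⟨u₁, hu₁U, hu₁⟩ := Finset.mem_image.mp h₁
    have hsub : S ⊆ A u₁ := by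
      rw [hu₁]
      exact (Finset.mem_powersetCard.mp (Finset.mem_filter.mp hS₁).1).1
    have hAu : A u₁ = T₂ := (Finset.mem_filter.mp hS₂).2 u₁ hu₁U hsub
    exact hne (by rw [← hu₁, hAu])
  have hbU : (U.image A).biUnion Excl ⊆ W.powersetCard 3 := by
    intro S hSb
    obtain ⟨T, hT, hSE⟩ := Finset.mem_biUnion.mp hSb
    obtain ⟨u₁, hu₁U, hu₁⟩ := Finset.mem_image.mp hT
    obtain ⟨hsub, hcard⟩ := Finset.mem_powersetCard.mp (Finset.mem_filter.mp hSE).1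
    refine Finset.mem_powersetCard.mpr ⟨hsub.trans ?_, hcard⟩
    rw [← hu₁]
    exact hAW u₁ hu₁U
  have hle : U.card ≤ (W.powersetCard 3).card := by
    rw [hfibsum]
    calc ∑ T ∈ U.image A, (fib T).card
        ≤ ∑ T ∈ U.image A, (Excl T).card := Finset.sum_le_sum key
      _ = ((U.image A).biUnion Excl).card := (Finset.card_biUnion hdisjE).symm
      _ ≤ (W.powersetCard 3).card := Finset.card_le_card hbU
  rw [Finset.card_powersetCard] at hle
  omega
end

section
/- Let G be a graph and U ⊆ V(G) a set of vertices such that the set U₀ = {v ∈ V(G) \ U : v has at least 4 neighbours in U} satisfies |U₀| > C(|U|, 3). Then G contains a copy of the 3-dimensional hypercube Q₃ as a subgraph. -/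
instance : DecidableRel cubeQ3.Adj := fun x y =>
  decidable_of_iff' _ (SimpleGraph.fromRel_adj _ x y)

set_option maxHeartbeats 1000000 in
/-- From a `K₄,₄` minus a perfect matching between `{wa,wb,wc,wd}` and
`{a,b,c,d}` we can assemble a copy of `Q₃`. -/
lemma assembleQ3 {V : Type*} [DecidableEq V] (G : SimpleGraph V) (U : Finset V)
    {a b c d wa wb wc wd : V}
    (ha : a ∈ U) (hb : b ∈ U) (hc : c ∈ U) (hd : d ∈ U)
    (hwa : wa ∉ U) (hwb : wb ∉ U) (hwc : wc ∉ U) (hwd : wd ∉ U)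
    (hab : a ≠ b) (hac : a ≠ c) (had : a ≠ d)
    (hbc : b ≠ c) (hbd : b ≠ d) (hcd : c ≠ d)
    (hwab : wa ≠ wb) (hwac : wa ≠ wc) (hwad : wa ≠ wd)
    (hwbc : wb ≠ wc) (hwbd : wb ≠ wd) (hwcd : wc ≠ wd)
    (Aab : G.Adj wa b) (Aac : G.Adj wa c) (Aad : G.Adj wa d)
    (Aba : G.Adj wb a) (Abc : G.Adj wb c) (Abd : G.Adj wb d)
    (Aca : G.Adj wc a) (Acb : G.Adj wc b) (Acd : G.Adj wc d)
    (Ada : G.Adj wd a) (Adb : G.Adj wd b) (Adc : G.Adj wd c) :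
    HasQ3Copy G := by
  have nwa : ∀ u ∈ U, wa ≠ u := fun u hu h => hwa (h ▸ hu)
  have nwb : ∀ u ∈ U, wb ≠ u := fun u hu h => hwb (h ▸ hu)
  have nwc : ∀ u ∈ U, wc ≠ u := fun u hu h => hwc (h ▸ hu)
  have nwd : ∀ u ∈ U, wd ≠ u := fun u hu h => hwd (h ▸ hu)
  have n1 := nwa a ha; have n2 := nwa b hb; have n3 := nwa c hc; have n4 := nwa d hd
  have n5 := nwb a ha; have n6 := nwb b hb; have n7 := nwb c hc; have n8 := nwb d hd
  have n9 := nwc a ha; have n10 := nwc b hb; have n11 := nwc c hc; have n12 := nwc d hd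
  have n13 := nwd a ha; have n14 := nwd b hb; have n15 := nwd c hc; have n16 := nwd d hd
  refine ⟨fun p => ![![![wd, c], ![b, wa]], ![![a, wb], ![wc, d]]] p.1 p.2.1 p.2.2, ?_, ?_⟩
  · have key : Function.LeftInverse
        (fun v => if v = wd then ((0,0,0) : Fin 2 × Fin 2 × Fin 2)
          else if v = c then (0,0,1) else if v = b then (0,1,0)
          else if v = wa then (0,1,1) else if v = a then (1,0,0)
          else if v = wb then (1,0,1) else if v = wc then (1,1,0) else (1,1,1))
        (fun p => ![![![wd, c], ![b, wa]], ![![a, wb], ![wc, d]]] p.1 p.2.1 p.2.2) := by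
      intro p
      fin_cases p <;>
        simp only [Matrix.cons_val', Matrix.cons_val_zero, Matrix.cons_val_one,
          Matrix.head_cons, Matrix.head_fin_const, Matrix.cons_val_fin_one,
          Matrix.empty_val', Fin.mk_zero, Fin.mk_one, Fin.isValue] <;>
        simp [n1, n2, n3, n4, n5, n6, n7, n8, n9, n10, n11, n12, n13, n14, n15, n16,
          n1.symm, n2.symm, n3.symm, n4.symm, n5.symm, n6.symm, n7.symm, n8.symm,
          n9.symm, n10.symm, n11.symm, n12.symm, n13.symm, n14.symm, n15.symm, n16.symm,
          hab, hac, had, hbc, hbd, hcd, hab.symm, hac.symm, had.symm, hbc.symm,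
          hbd.symm, hcd.symm, hwab, hwac, hwad, hwbc, hwbd, hwcd,
          hwab.symm, hwac.symm, hwad.symm, hwbc.symm, hwbd.symm, hwcd.symm]
    exact key.injective
  · intro x y h
    fin_cases x <;> fin_cases y <;>
      first
        | exact absurd h (by decide)
        | exact Aab | exact Aac | exact Aad | exact Aba | exact Abc | exact Abd
        | exact Aca | exact Acb | exact Acd | exact Ada | exact Adb | exact Adc
        | exact Aab.symm | exact Aac.symm | exact Aad.symm
        | exact Aba.symm | exact Abc.symm | exact Abd.symm
        | exact Aca.symm | exact Acb.symm | exact Acd.symm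
        | exact Ada.symm | exact Adb.symm | exact Adc.symm

/-- If some set `W` of vertices outside `U`, each with at least `4` neighbours in
`U`, covers (via the `3`-subsets of neighbourhoods) fewer triples than `|W|`,
then `G` contains `Q₃`.  Proved by induction on a bound for `|W|`, taking a
minimal "Hall violator" and applying Hall's theorem on the dual side. -/
lemma violatorQ3 {V : Type*} [Fintype V] [DecidableEq V] (G : SimpleGraph V)
    [DecidableRel G.Adj] (U : Finset V) :
    ∀ (n : ℕ) (W : Finset V), W.card ≤ n →
      (∀ v ∈ W, v ∉ U ∧ 4 ≤ (G.neighborFinset v ∩ U).card) →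
      (W.biUnion fun v => (G.neighborFinset v ∩ U).powersetCard 3).card < W.card →
      HasQ3Copy G := by
  intro n
  induction n with
  | zero => intro W hWn _ hlt; omega
  | succ n ih =>
    intro W hWn hWU hlt
    set t : V → Finset (Finset V) :=
      fun v => (G.neighborFinset v ∩ U).powersetCard 3 with ht
    set B : Finset (Finset V) := W.biUnion t with hB
    by_cases hHall : ∀ F : Finset {T // T ∈ B},
        F.card ≤ (F.biUnion fun T => W.filter fun v => T.1 ∈ t v).card
    · obtain ⟨g, hg_inj, hg_mem⟩ :=
        (Finset.all_card_le_biUnion_card_iff_exists_injective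
          (fun T : {T // T ∈ B} => W.filter fun v => T.1 ∈ t v)).mp hHall
      have hWne : W.Nonempty := Finset.card_pos.mp (by omega)
      obtain ⟨v, hv⟩ := hWne
      obtain ⟨S, hSsub, hScard⟩ :=
        Finset.exists_subset_card_eq (hWU v hv).2
      obtain ⟨a, haS⟩ := Finset.card_pos.mp (by omega : 0 < S.card)
      have h3 : (S.erase a).card = 3 := by
        rw [Finset.card_erase_of_mem haS, hScard]
      obtain ⟨b, c, d, hbc, hbd, hcd, hSe⟩ := Finset.card_eq_three.mp h3
      have hbE : b ∈ S.erase a := by rw [hSe]; simp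
      have hcE : c ∈ S.erase a := by rw [hSe]; simp
      have hdE : d ∈ S.erase a := by rw [hSe]; simp
      have hbS : b ∈ S := Finset.mem_of_mem_erase hbE
      have hcS : c ∈ S := Finset.mem_of_mem_erase hcE
      have hdS : d ∈ S := Finset.mem_of_mem_erase hdE
      have hab : a ≠ b := fun h => (Finset.notMem_erase a S) (h ▸ hbE)
      have hac : a ≠ c := fun h => (Finset.notMem_erase a S) (h ▸ hcE)
      have had : a ≠ d := fun h => (Finset.notMem_erase a S) (h ▸ hdE)
      have hTmem : ∀ x ∈ S, S.erase x ∈ B := by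
        intro x hx
        rw [hB, Finset.mem_biUnion]
        exact ⟨v, hv, by
          rw [ht, Finset.mem_powersetCard]
          exact ⟨(Finset.erase_subset x S).trans hSsub,
            by rw [Finset.card_erase_of_mem hx, hScard]⟩⟩
      set Ta : {T // T ∈ B} := ⟨S.erase a, hTmem a haS⟩
      set Tb : {T // T ∈ B} := ⟨S.erase b, hTmem b hbS⟩
      set Tc : {T // T ∈ B} := ⟨S.erase c, hTmem c hcS⟩
      set Td : {T // T ∈ B} := ⟨S.erase d, hTmem d hdS⟩
      have hne : ∀ x ∈ S, ∀ y ∈ S, x ≠ y → S.erase x ≠ S.erase y := by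
        intro x hx y hy hxy h
        have : y ∈ S.erase x := Finset.mem_erase.mpr ⟨fun hh => hxy hh.symm, hy⟩
        rw [h] at this
        exact Finset.notMem_erase y S this
      have hgW : ∀ T : {T // T ∈ B}, g T ∈ W ∧ T.1 ∈ t (g T) := by
        intro T
        have := hg_mem T
        rw [Finset.mem_filter] at this
        exact this
      have hadj : ∀ (T : {T // T ∈ B}) (y : V), y ∈ T.1 → G.Adj (g T) y := by
        intro T y hy
        have h2 := (hgW T).2
        rw [ht, Finset.mem_powersetCard] at h2
        have := h2.1 hy
        rw [Finset.mem_inter, SimpleGraph.mem_neighborFinset] at this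
        exact this.1
      have hmemU : ∀ x ∈ S, x ∈ U := by
        intro x hx
        have := hSsub hx
        rw [Finset.mem_inter] at this
        exact this.2
      have hgne : ∀ {T T' : {T // T ∈ B}}, T.1 ≠ T'.1 → g T ≠ g T' := by
        intro T T' hTT' h
        exact hTT' (congrArg Subtype.val (hg_inj h))
      have hmemS : ∀ x ∈ S, ∀ y ∈ S, x ≠ y → y ∈ S.erase x := fun x hx y hy hxy =>
        Finset.mem_erase.mpr ⟨fun hh => hxy hh.symm, hy⟩
      exact assembleQ3 G U
        (hmemU a haS) (hmemU b hbS) (hmemU c hcS) (hmemU d hdS)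
        (hWU _ (hgW Ta).1).1 (hWU _ (hgW Tb).1).1 (hWU _ (hgW Tc).1).1 (hWU _ (hgW Td).1).1
        hab hac had hbc hbd hcd
        (hgne (hne a haS b hbS hab)) (hgne (hne a haS c hcS hac))
        (hgne (hne a haS d hdS had)) (hgne (hne b hbS c hcS hbc))
        (hgne (hne b hbS d hdS hbd)) (hgne (hne c hcS d hdS hcd))
        (hadj Ta b (hmemS a haS b hbS hab)) (hadj Ta c (hmemS a haS c hcS hac))
        (hadj Ta d (hmemS a haS d hdS had))
        (hadj Tb a (hmemS b hbS a haS hab.symm)) (hadj Tb c (hmemS b hbS c hcS hbc))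
        (hadj Tb d (hmemS b hbS d hdS hbd))
        (hadj Tc a (hmemS c hcS a haS hac.symm)) (hadj Tc b (hmemS c hcS b hbS hbc.symm))
        (hadj Tc d (hmemS c hcS d hdS hcd))
        (hadj Td a (hmemS d hdS a haS had.symm)) (hadj Td b (hmemS d hdS b hbS hbd.symm))
        (hadj Td c (hmemS d hdS c hcS hcd.symm))
    · push_neg at hHall
      obtain ⟨F, hF⟩ := hHall
      set D : Finset V := F.biUnion fun T => W.filter fun v => T.1 ∈ t v with hD
      have hFne : F.Nonempty := by
        rw [← Finset.card_pos]; omega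
      obtain ⟨T0, hT0⟩ := hFne
      have hT0B : (T0 : Finset V) ∈ W.biUnion t := T0.2
      obtain ⟨v0, hv0W, hv0t⟩ := Finset.mem_biUnion.mp hT0B
      have hv0D : v0 ∈ D := by
        rw [hD, Finset.mem_biUnion]
        exact ⟨T0, hT0, Finset.mem_filter.mpr ⟨hv0W, hv0t⟩⟩
      set W' : Finset V := W \ D with hW'
      have hW'ss : W' ⊂ W := by
        refine Finset.ssubset_iff_of_subset (Finset.sdiff_subset) |>.mpr ?_
        exact ⟨v0, hv0W, by simp [hW', hv0D]⟩
      have hW'card : W'.card < W.card := Finset.card_lt_card hW'ss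
      have hsub : W'.biUnion t ⊆ B \ F.image Subtype.val := by
        intro T hT
        rw [Finset.mem_biUnion] at hT
        obtain ⟨w, hwW', hwT⟩ := hT
        have hwW : w ∈ W := (Finset.mem_sdiff.mp hwW').1
        have hwD : w ∉ D := (Finset.mem_sdiff.mp hwW').2
        rw [Finset.mem_sdiff]
        constructor
        · rw [hB, Finset.mem_biUnion]; exact ⟨w, hwW, hwT⟩
        · intro hTF
          rw [Finset.mem_image] at hTF
          obtain ⟨T', hT'F, hT'val⟩ := hTF
          exact hwD (by
            rw [hD, Finset.mem_biUnion]
            exact ⟨T', hT'F, Finset.mem_filter.mpr ⟨hwW, hT'val ▸ hwT⟩⟩)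
      have himgcard : (F.image Subtype.val).card = F.card :=
        Finset.card_image_of_injective F Subtype.val_injective
      have himgsub : F.image Subtype.val ⊆ B := by
        intro T hT
        rw [Finset.mem_image] at hT
        obtain ⟨T', _, hT'⟩ := hT
        exact hT' ▸ T'.2
      have h1 : (W'.biUnion t).card ≤ B.card - F.card := by
        calc (W'.biUnion t).card ≤ (B \ F.image Subtype.val).card :=
              Finset.card_le_card hsub
          _ = B.card - F.card := by rw [Finset.card_sdiff_of_subset himgsub, himgcard]
      have h2 : F.card ≤ B.card := himgcard ▸ Finset.card_le_card himgsub
      have h3 : W.card ≤ W'.card + D.card := Finset.card_le_card_sdiff_add_card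
      exact ih W' (by omega) (fun v hvW' => hWU v (Finset.mem_sdiff.mp hvW').1)
        (by omega)

/-- if the set `U₀` of vertices outside `U` with at least `4`
neighbours in `U` satisfies `|U₀| > C(|U|,3)`, then `G` contains `Q₃`. -/
theorem stmt1 {V : Type*} [Fintype V] [DecidableEq V]
    (G : SimpleGraph V) [DecidableRel G.Adj] (U : Finset V)
    (hU0 : U.card.choose 3 <
      (Finset.univ.filter
        (fun v => v ∉ U ∧ 4 ≤ (G.neighborFinset v ∩ U).card)).card) :
    HasQ3Copy G := by
  classical
  set U₀ : Finset V := Finset.univ.filter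
    (fun v => v ∉ U ∧ 4 ≤ (G.neighborFinset v ∩ U).card) with hU₀def
  set t : V → Finset (Finset V) :=
    fun v => (G.neighborFinset v ∩ U).powersetCard 3 with ht
  by_cases hex : ∃ W : Finset V, W ⊆ U₀ ∧ (W.biUnion t).card < W.card
  · obtain ⟨W, hWsub, hlt⟩ := hex
    exact violatorQ3 G U W.card W le_rfl
      (fun v hv => (Finset.mem_filter.mp (hWsub hv)).2) hlt
  · push_neg at hex
    have hHall : ∀ s : Finset {v // v ∈ U₀},
        s.card ≤ (s.biUnion (fun v => t v.1)).card := by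
      intro s
      have h1 : s.image Subtype.val ⊆ U₀ := by
        intro x hx
        obtain ⟨y, _, rfl⟩ := Finset.mem_image.mp hx
        exact y.2
      have h2 := hex _ h1
      rwa [Finset.card_image_of_injective _ Subtype.val_injective,
        Finset.image_biUnion] at h2
    obtain ⟨f, hf_inj, hf_mem⟩ :=
      (Finset.all_card_le_biUnion_card_iff_exists_injective
        (fun v : {v // v ∈ U₀} => t v.1)).mp hHall
    have hrange : ∀ v : {v // v ∈ U₀}, f v ∈ U.powersetCard 3 := by
      intro v
      have := hf_mem v
      rw [ht, Finset.mem_powersetCard] at this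
      rw [Finset.mem_powersetCard]
      exact ⟨this.1.trans Finset.inter_subset_right, this.2⟩
    have hcard : U₀.card ≤ (U.powersetCard 3).card := by
      have hinj : Function.Injective
          (fun v : {v // v ∈ U₀} =>
            (⟨f v, hrange v⟩ : {T // T ∈ U.powersetCard 3})) := by
        intro x y h
        exact hf_inj (congrArg Subtype.val h)
      calc U₀.card = Fintype.card {v // v ∈ U₀} := (Fintype.card_coe _).symm
        _ ≤ Fintype.card {T // T ∈ U.powersetCard 3} :=
            Fintype.card_le_of_injective _ hinj
        _ = (U.powersetCard 3).card := Fintype.card_coe _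
    rw [Finset.card_powersetCard] at hcard
    omega
end
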